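/- Identify ℝ² with ℂ. Let d_1,…,d_{12} be the points 0, i, 2i, 3i, 3, 3+i, 3+2i, 3+3i, 4+3i, 5+3i, 6+3i, 7+3i, let f_k(x) = (x + d_k)/4 for 1 ≤ k ≤ 12, and let E₃ be the unique nonempty compact subset of ℝ² with E₃ = ⋃_{k=1}^{12} f_k(E₃). Let Q be the closed trapezoid which is the convex hull of the four points 0, 1, i, 7/3 + i; let A = {t + i : 1 ≤ t ≤ 7/3} and B = {5/8 + t·i : 0 ≤ t ≤ 1}. Then A ⊆ E₃ ⊆ Q and B ∩ E₃ = ∅. -/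

import Mathlib

open Complex

/-- The twelve digits `0, i, 2i, 3i, 3, 3+i, 3+2i, 3+3i, 4+3i, 5+3i, 6+3i, 7+3i`. -/
noncomputable def d12 : Fin 12 → ℂ :=
  ![0, I, 2 * I, 3 * I, 3, 3 + I, 3 + 2 * I, 3 + 3 * I,
    4 + 3 * I, 5 + 3 * I, 6 + 3 * I, 7 + 3 * I]

/-- The maps `f_k(x) = (x + d_k)/4`. -/
noncomputable def f12 (k : Fin 12) (x : ℂ) : ℂ := (x + d12 k) / 4

lemma f12_re (k : Fin 12) (x : ℂ) : (f12 k x).re = (x.re + (d12 k).re)/4 := by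
  simp [f12, Complex.div_re, Complex.normSq]

lemma f12_im (k : Fin 12) (x : ℂ) : (f12 k x).im = (x.im + (d12 k).im)/4 := by
  simp [f12, Complex.div_im, Complex.normSq]

lemma f12_dist (k : Fin 12) (x y : ℂ) : dist (f12 k x) (f12 k y) = dist x y / 4 := by
  simp only [f12, Complex.dist_eq]
  have h : (x + d12 k)/4 - (y + d12 k)/4 = (x - y)/4 := by ring
  rw [h, norm_div]
  norm_num

lemma digit_bounds (k : Fin 12) : 0 ≤ (d12 k).re ∧ 0 ≤ (d12 k).im ∧ (d12 k).im ≤ 3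
    ∧ 3*(d12 k).re ≤ 9 + 4*(d12 k).im ∧ ((d12 k).re = 0 ∨ 3 ≤ (d12 k).re) := by
  fin_cases k <;> norm_num [d12]

def Qset : Set ℂ := {z : ℂ | 0 ≤ z.im ∧ z.im ≤ 1 ∧ 0 ≤ z.re ∧ 3*z.re ≤ 3 + 4*z.im}

lemma isClosed_Qset : IsClosed Qset := by
  have h1 : IsClosed {z : ℂ | 0 ≤ z.im} := isClosed_le continuous_const Complex.continuous_im
  have h2 : IsClosed {z : ℂ | z.im ≤ 1} := isClosed_le Complex.continuous_im continuous_const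
  have h3 : IsClosed {z : ℂ | 0 ≤ z.re} := isClosed_le continuous_const Complex.continuous_re
  have h4 : IsClosed {z : ℂ | 3*z.re ≤ 3 + 4*z.im} :=
    isClosed_le (continuous_const.mul Complex.continuous_re)
      (continuous_const.add (continuous_const.mul Complex.continuous_im))
  have he : Qset = {z : ℂ | 0 ≤ z.im} ∩ ({z : ℂ | z.im ≤ 1} ∩ ({z : ℂ | 0 ≤ z.re} ∩ {z : ℂ | 3*z.re ≤ 3 + 4*z.im})) := by
    ext z; simp [Qset, Set.mem_inter_iff, and_assoc]
  rw [he]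
  exact h1.inter (h2.inter (h3.inter h4))

lemma Qset_inv (k : Fin 12) {z : ℂ} (hz : z ∈ Qset) : f12 k z ∈ Qset := by
  obtain ⟨h1, h2, h3, h4⟩ := hz
  obtain ⟨g1, g2, g3, g4, -⟩ := digit_bounds k
  refine ⟨?_, ?_, ?_, ?_⟩ <;> simp only [f12_re, f12_im] <;> linarith

lemma transfer (A K : Set ℂ)
    (hA : ∀ a ∈ A, ∃ k : Fin 12, ∃ b ∈ A, f12 k b = a)
    (hK : ∀ k : Fin 12, ∀ y ∈ K, f12 k y ∈ K)
    (hKc : IsClosed K) (hKne : K.Nonempty) (hAb : Bornology.IsBounded A) :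
    A ⊆ K := by
  obtain ⟨q, hq⟩ := hKne
  obtain ⟨C, hC⟩ := (Metric.isBounded_iff_subset_closedBall q).1 hAb
  have key : ∀ n : ℕ, ∀ a ∈ A, ∃ y ∈ K, dist a y ≤ (1/4 : ℝ)^n * C := by
    intro n
    induction n with
    | zero =>
      intro a ha
      exact ⟨q, hq, by simpa using Metric.mem_closedBall.1 (hC ha)⟩
    | succ n ih =>
      intro a ha
      obtain ⟨k, b, hb, hfb⟩ := hA a ha
      obtain ⟨y, hy, hd⟩ := ih b hb
      refine ⟨f12 k y, hK k y hy, ?_⟩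
      rw [← hfb, f12_dist]
      calc dist b y / 4 ≤ ((1/4 : ℝ)^n * C)/4 := by linarith
        _ = (1/4 : ℝ)^(n+1) * C := by ring
  intro a ha
  have hmem : a ∈ closure K := by
    rw [Metric.mem_closure_iff]
    intro ε hε
    have hC0 : (0:ℝ) < max C 1 := lt_max_of_lt_right one_pos
    obtain ⟨n, hn⟩ := exists_pow_lt_of_lt_one (div_pos hε hC0) (by norm_num : (1/4 : ℝ) < 1)
    obtain ⟨y, hy, hd⟩ := key n a ha
    have h1 : dist a y ≤ (1/4 : ℝ)^n * max C 1 :=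
      hd.trans (mul_le_mul_of_nonneg_left (le_max_left C 1) (by positivity))
    have h2 : (1/4 : ℝ)^n * max C 1 < ε := by
      calc (1/4 : ℝ)^n * max C 1 < (ε / max C 1) * max C 1 :=
            mul_lt_mul_of_pos_right hn hC0
        _ = ε := div_mul_cancel₀ ε hC0.ne'
    exact ⟨y, hy, lt_of_le_of_lt h1 h2⟩
  rwa [hKc.closure_eq] at hmem

lemma Qset_subset_hull : Qset ⊆ convexHull ℝ ({0, 1, I, 7/3 + I} : Set ℂ) := by
  intro z hz
  obtain ⟨h1, h2, h3, h4⟩ := hz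
  set x := z.re with hx
  set y := z.im with hy
  have hden : (0:ℝ) < 1 + 4*y/3 := by linarith
  set s : ℝ := x / (1 + 4*y/3) with hs
  have hs0 : 0 ≤ s := div_nonneg h3 hden.le
  have hs1 : s ≤ 1 := by rw [hs, div_le_one hden]; linarith
  have hsx : s * (1 + 4*y/3) = x := div_mul_cancel₀ x hden.ne'
  have hsx' : ((x:ℝ):ℂ) = (s:ℂ)*(1+4*(y:ℂ)/3) := by exact_mod_cast hsx.symm
  have hm0 : (0:ℂ) ∈ convexHull ℝ ({0, 1, I, 7/3 + I} : Set ℂ) := subset_convexHull ℝ _ (by simp)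
  have hm1 : (1:ℂ) ∈ convexHull ℝ ({0, 1, I, 7/3 + I} : Set ℂ) := subset_convexHull ℝ _ (by simp)
  have hmI : (I:ℂ) ∈ convexHull ℝ ({0, 1, I, 7/3 + I} : Set ℂ) := subset_convexHull ℝ _ (by simp)
  have hm7 : ((7/3 : ℂ) + I) ∈ convexHull ℝ ({0, 1, I, 7/3 + I} : Set ℂ) := subset_convexHull ℝ _ (by simp)
  have hp : ((s:ℂ)) ∈ convexHull ℝ ({0, 1, I, 7/3 + I} : Set ℂ) := by
    have h := convex_convexHull ℝ ({0, 1, I, 7/3 + I} : Set ℂ) hm0 hm1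
      (by linarith : (0:ℝ) ≤ 1 - s) hs0 (by ring)
    have he : (1-s) • (0:ℂ) + s • (1:ℂ) = (s:ℂ) := by
      simp [Complex.real_smul]
    rwa [he] at h
  have hq : ((s:ℂ)*(7/3) + I) ∈ convexHull ℝ ({0, 1, I, 7/3 + I} : Set ℂ) := by
    have h := convex_convexHull ℝ ({0, 1, I, 7/3 + I} : Set ℂ) hmI hm7
      (by linarith : (0:ℝ) ≤ 1 - s) hs0 (by ring)
    have he : (1-s) • I + s • ((7/3 : ℂ) + I) = (s:ℂ)*(7/3) + I := by
      rw [Complex.real_smul, Complex.real_smul]; push_cast; ring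
    rwa [he] at h
  have hz' : z = (1-y) • ((s:ℂ)) + y • ((s:ℂ)*(7/3)+I) := by
    rw [Complex.real_smul, Complex.real_smul, ← Complex.re_add_im z, ← hx, ← hy]
    push_cast
    linear_combination hsx'
  rw [hz']
  exact convex_convexHull ℝ ({0, 1, I, 7/3 + I} : Set ℂ) hp hq (by linarith) h1 (by ring)

lemma A_dec : ∀ a ∈ (fun t : ℝ => (t:ℂ) + I) '' Set.Icc (1:ℝ) (7/3),
    ∃ k : Fin 12, ∃ b ∈ (fun t : ℝ => (t:ℂ) + I) '' Set.Icc (1:ℝ) (7/3), f12 k b = a := by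
  rintro a ⟨t, ⟨ht1, ht2⟩, rfl⟩
  have step : ∀ (k : Fin 12) (u : ℝ), u ∈ Set.Icc (1:ℝ) (7/3) →
      f12 k ((u:ℂ) + I) = (t:ℂ) + I →
      ∃ k : Fin 12, ∃ b ∈ (fun t : ℝ => (t:ℂ) + I) '' Set.Icc (1:ℝ) (7/3),
        f12 k b = (t:ℂ) + I := by
    intro k u hu he
    exact ⟨k, (u:ℂ) + I, ⟨u, hu, rfl⟩, he⟩
  have e7 : d12 7 = 3 + 3*I := rfl
  have e8 : d12 8 = 4 + 3*I := rfl
  have e9 : d12 9 = 5 + 3*I := rfl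
  have e10 : d12 10 = 6 + 3*I := rfl
  have e11 : d12 11 = 7 + 3*I := rfl
  rcases le_or_gt t (4/3) with h | h
  · refine step 7 (4*t-3) ⟨by linarith, by linarith⟩ ?_
    show ((4*t-3 : ℝ) + I + d12 7)/4 = (t:ℂ) + I
    rw [e7]; push_cast; ring
  rcases le_or_gt t (19/12) with h2 | h2
  · refine step 8 (4*t-4) ⟨by linarith, by linarith⟩ ?_
    show ((4*t-4 : ℝ) + I + d12 8)/4 = (t:ℂ) + I
    rw [e8]; push_cast; ring
  rcases le_or_gt t (11/6) with h3 | h3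
  · refine step 9 (4*t-5) ⟨by linarith, by linarith⟩ ?_
    show ((4*t-5 : ℝ) + I + d12 9)/4 = (t:ℂ) + I
    rw [e9]; push_cast; ring
  rcases le_or_gt t (25/12) with h4 | h4
  · refine step 10 (4*t-6) ⟨by linarith, by linarith⟩ ?_
    show ((4*t-6 : ℝ) + I + d12 10)/4 = (t:ℂ) + I
    rw [e10]; push_cast; ring
  · refine step 11 (4*t-7) ⟨by linarith, by linarith⟩ ?_
    show ((4*t-7 : ℝ) + I + d12 11)/4 = (t:ℂ) + I
    rw [e11]; push_cast; ring

/-- Let `E₃ ⊆ ℂ ≅ ℝ²` be the attractor of the twelve maps `f_k`.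
Let `Q` be the closed trapezoid `conv{0, 1, i, 7/3 + i}`, `A = {t + i : 1 ≤ t ≤ 7/3}`
and `B = {5/8 + t·i : 0 ≤ t ≤ 1}`. Then `A ⊆ E₃ ⊆ Q` and `B ∩ E₃ = ∅`. -/
theorem E3_trapezoid_bounds
    (E₃ : Set ℂ) (hne : E₃.Nonempty) (hc : IsCompact E₃)
    (hE : E₃ = ⋃ k : Fin 12, f12 k '' E₃) :
    (fun t : ℝ => (t : ℂ) + I) '' Set.Icc (1 : ℝ) (7 / 3) ⊆ E₃
    ∧ E₃ ⊆ convexHull ℝ ({0, 1, I, 7 / 3 + I} : Set ℂ)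
    ∧ (fun t : ℝ => (5 / 8 : ℂ) + (t : ℂ) * I) '' Set.Icc (0 : ℝ) 1 ∩ E₃ = ∅ := by
  have hEinv : ∀ k : Fin 12, ∀ y ∈ E₃, f12 k y ∈ E₃ := by
    intro k y hy
    rw [hE]
    exact Set.mem_iUnion.2 ⟨k, Set.mem_image_of_mem _ hy⟩
  have hEdec : ∀ a ∈ E₃, ∃ k : Fin 12, ∃ b ∈ E₃, f12 k b = a := by
    intro a ha
    rw [hE] at ha
    obtain ⟨k, b, hb, hfb⟩ := Set.mem_iUnion.1 ha
    exact ⟨k, b, hb, hfb⟩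
  -- E₃ ⊆ Qset
  have hEQ : E₃ ⊆ Qset :=
    transfer E₃ Qset hEdec (fun k y hy => Qset_inv k hy) isClosed_Qset
      ⟨0, by norm_num [Qset]⟩ hc.isBounded
  -- A ⊆ E₃
  have hAE : (fun t : ℝ => (t : ℂ) + I) '' Set.Icc (1 : ℝ) (7 / 3) ⊆ E₃ := by
    apply transfer _ _ A_dec hEinv hc.isClosed hne
    exact ((isCompact_Icc.image (Complex.continuous_ofReal.add continuous_const)).isBounded)
  refine ⟨hAE, fun z hz => Qset_subset_hull (hEQ hz), ?_⟩
  -- B ∩ E₃ = ∅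
  rw [Set.eq_empty_iff_forall_notMem]
  rintro z ⟨⟨t, ht, rfl⟩, hzE⟩
  obtain ⟨k, w, hw, hfw⟩ := hEdec _ hzE
  obtain ⟨hw1, hw2, hw3, hw4⟩ := hEQ hw
  have hre : (w.re + (d12 k).re)/4 = 5/8 := by
    have := congrArg Complex.re hfw
    rw [f12_re] at this
    simpa using this
  obtain ⟨-, -, -, -, hd⟩ := digit_bounds k
  rcases hd with hd | hd <;> linarith
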